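/- Suppose |ψ⟩ = Σ_{i=1}^{N} c_i |ψ_i⟩ with Σ_i |c_i|² = 1, where each |ψ_i⟩ ∈ H_A ⊗ H_B has Schmidt decomposition |ψ_i⟩ = d^{-1/2} Σ_{μ=1}^{d} |e_μ^{(i)}⟩ ⊗ |f_μ^{(i)}⟩, and the combined families satisfy ⟨e_μ^{(i)}|e_{μ'}^{(i')}⟩ = ⟨f_μ^{(i)}|f_{μ'}^{(i')}⟩ = δ_{μμ'} δ_{ii'}. Then the logarithmic negativity of |ψ⟩⟨ψ| (partial transpose in the basis {|e_μ^{(i)}⟩}) is E_N = 2 log₂(Σ_i |c_i|) + log₂ d. -/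

import Mathlib

open scoped BigOperators Kronecker ComplexOrder
noncomputable section
open Matrix

/-- trace norm `Tr |X|` where `|X| = √(Xᴴ X)`. -/
noncomputable def traceNorm {n : Type*} [Fintype n] [DecidableEq n] (X : Matrix n n ℂ) : ℝ :=
  (((Matrix.posSemidef_conjTranspose_mul_self X).1.eigenvectorUnitary : Matrix n n ℂ) *
      diagonal (((↑) : ℝ → ℂ) ∘ (√·) ∘ (Matrix.posSemidef_conjTranspose_mul_self X).1.eigenvalues) *
      (star (Matrix.posSemidef_conjTranspose_mul_self X).1.eigenvectorUnitary : Matrix n n ℂ)).trace.re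

/-- outer product `|u⟩⟨v|`. -/
def outer {n : Type*} (u v : n → ℂ) : Matrix n n ℂ := fun i j => u i * star (v j)

/-- inner product `⟨u|v⟩`. -/
def dotc {n : Type*} [Fintype n] (u v : n → ℂ) : ℂ := ∑ i, star (u i) * v i

/-- an orthonormal family of vectors. -/
def Orthonormal' {ι n : Type*} [Fintype n] [DecidableEq ι] (φ : ι → n → ℂ) : Prop :=
  ∀ i j, dotc (φ i) (φ j) = if i = j then 1 else 0

/-- tensor product of vectors `|u⟩ ⊗ |v⟩`. -/
def kvec {a b : Type*} (u : a → ℂ) (v : b → ℂ) : a × b → ℂ := fun p => u p.1 * v p.2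

/-- rank-one projector `|ψ⟩⟨ψ|`. -/
def projv {n : Type*} (ψ : n → ℂ) : Matrix n n ℂ := fun i j => ψ i * star (ψ j)

/-- partial trace over the second (B) factor. -/
def ptraceB {a b : Type*} [Fintype b] (ρ : Matrix (a × b) (a × b) ℂ) : Matrix a a ℂ :=
  fun i k => ∑ j, ρ (i, j) (k, j)

/-- partial trace over the first (A) factor. -/
def ptraceA {a b : Type*} [Fintype a] (ρ : Matrix (a × b) (a × b) ℂ) : Matrix b b ℂ :=
  fun j l => ∑ i, ρ (i, j) (i, l)

/-- partial transpose over the first (A) factor, in the canonical product basis. -/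
def pt {a b : Type*} (ρ : Matrix (a × b) (a × b) ℂ) : Matrix (a × b) (a × b) ℂ :=
  fun p q => ρ (q.1, p.2) (p.1, q.2)

/-- logarithmic negativity `E_N(ρ) = log₂ Tr |ρ^{T_A}|`. -/
noncomputable def logNeg {a b : Type*} [Fintype a] [Fintype b] [DecidableEq a] [DecidableEq b]
    (ρ : Matrix (a × b) (a × b) ℂ) : ℝ := Real.logb 2 (traceNorm (pt ρ))


lemma dotc_kvec {a b : Type*} [Fintype a] [Fintype b] (u w : a → ℂ) (v x : b → ℂ) :
    dotc (kvec u v) (kvec w x) = dotc u w * dotc v x := by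
  simp only [dotc, kvec, Fintype.sum_prod_type, star_mul']
  rw [Finset.sum_mul_sum]
  refine Finset.sum_congr rfl fun i _ => Finset.sum_congr rfl fun j _ => by ring

lemma outer_mul_outer {n : Type*} [Fintype n] [DecidableEq n] (u v w x : n → ℂ) :
    outer u v * outer w x = dotc v w • outer u x := by
  ext i j
  simp only [outer, Matrix.mul_apply, Matrix.smul_apply, dotc, smul_eq_mul, Finset.sum_mul]
  refine Finset.sum_congr rfl fun k _ => by ring

lemma outer_conjTranspose {n : Type*} (u v : n → ℂ) : (outer u v)ᴴ = outer v u := by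
  ext i j
  simp [outer, Matrix.conjTranspose_apply, mul_comm]

lemma trace_outer {n : Type*} [Fintype n] (u v : n → ℂ) : (outer u v).trace = dotc v u := by
  simp [Matrix.trace, Matrix.diag, outer, dotc, mul_comm]

lemma outer_kron {a b : Type*} (u v : a → ℂ) (w x : b → ℂ) :
    outer u v ⊗ₖ outer w x = outer (kvec u w) (kvec v x) := by
  ext ⟨i,j⟩ ⟨k,l⟩
  simp only [outer, kvec, Matrix.kroneckerMap_apply, star_mul']
  ring

lemma dot_outer_self {n : Type*} [Fintype n] (u x : n → ℂ) :
    star x ⬝ᵥ (outer u u *ᵥ x) = star (dotc u x) * dotc u x := by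
  simp only [outer, Matrix.mulVec, dotProduct, dotc, Pi.star_apply, star_sum, star_mul',
    star_star, Finset.mul_sum]
  simp only [Finset.sum_mul]
  rw [Finset.sum_comm]
  refine Finset.sum_congr rfl fun i _ => Finset.sum_congr rfl fun j _ => by ring

lemma sum_mulVec' {n ι : Type*} [Fintype n] [Fintype ι] (M : ι → Matrix n n ℂ) (x : n → ℂ) :
    (∑ i, M i) *ᵥ x = ∑ i, M i *ᵥ x := by
  ext j
  simp [Matrix.mulVec, dotProduct, Matrix.sum_apply, Finset.sum_apply, Finset.sum_mul]
  rw [Finset.sum_comm]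

lemma dotProduct_sum' {n ι : Type*} [Fintype n] [Fintype ι] (x : n → ℂ) (v : ι → n → ℂ) :
    x ⬝ᵥ (∑ i, v i) = ∑ i, x ⬝ᵥ v i := by
  simp only [dotProduct, Finset.sum_apply, Finset.mul_sum]
  rw [Finset.sum_comm]

lemma mul_collapse {ι n : Type*} [Fintype ι] [DecidableEq ι] [Fintype n] [DecidableEq n]
    (G₁ G₂ G₃ G₄ : ι → n → ℂ) (α β : ι → ℂ)
    (h : ∀ z z', dotc (G₂ z) (G₃ z') = if z = z' then 1 else 0) :
    (∑ z, α z • outer (G₁ z) (G₂ z)) * (∑ z, β z • outer (G₃ z) (G₄ z))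
      = ∑ z, (α z * β z) • outer (G₁ z) (G₄ z) := by
  rw [Finset.sum_mul]
  refine Finset.sum_congr rfl fun z _ => ?_
  rw [Finset.mul_sum, Finset.sum_eq_single z]
  · rw [smul_mul_assoc, mul_smul_comm, outer_mul_outer, h, if_pos rfl, one_smul, smul_smul]
  · intro z' _ hz'
    rw [smul_mul_assoc, mul_smul_comm, outer_mul_outer, h, if_neg (fun hh => hz' hh.symm),
      zero_smul, smul_zero, smul_zero]
  · exact fun h => absurd (Finset.mem_univ z) h

theorem stmt13 {a b : Type*} [Fintype a] [Fintype b] [DecidableEq a] [DecidableEq b]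
    {N d : ℕ} (hd : 0 < d)
    (c : Fin N → ℂ) (hc : ∑ i, ‖c i‖ ^ 2 = 1)
    (e : Fin N × Fin d → a → ℂ) (f : Fin N × Fin d → b → ℂ)
    (he : Orthonormal' e) (hf : Orthonormal' f)
    (ψ : a × b → ℂ)
    (hψ : ψ = ∑ i, c i • (((Real.sqrt d : ℂ))⁻¹ • ∑ μ, kvec (e (i, μ)) (f (i, μ))))
    -- the partial transpose of |ψ⟩⟨ψ| over A, taken in the basis {|e^{(i)}_μ⟩}
    (R : Matrix (a × b) (a × b) ℂ)
    (hR : R = ((d : ℂ))⁻¹ • ∑ i, ∑ i', ∑ μ, ∑ μ',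
        (c i * star (c i')) •
          (outer (e (i', μ')) (e (i, μ)) ⊗ₖ outer (f (i, μ)) (f (i', μ')))) :
    Real.logb 2 (traceNorm R)
      = 2 * Real.logb 2 (∑ i, ‖c i‖) + Real.logb 2 d := by
  classical
  -- notation
  set s : ℝ := ∑ i, ‖c i‖ with hs_def
  have hdR : (d : ℝ) ≠ 0 := Nat.cast_ne_zero.mpr hd.ne'
  have hdC : (d : ℂ) ≠ 0 := Nat.cast_ne_zero.mpr hd.ne'
  -- the orthonormal family G
  let G : (Fin N × Fin d) × (Fin N × Fin d) → a × b → ℂ := fun z => kvec (e z.1) (f z.2)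
  have hG : ∀ z z', dotc (G z) (G z') = if z = z' then 1 else 0 := by
    rintro ⟨p, q⟩ ⟨p', q'⟩
    show dotc (kvec (e p) (f q)) (kvec (e p') (f q')) = _
    rw [dotc_kvec, he p p', hf q q']
    by_cases h1 : p = p' <;> by_cases h2 : q = q' <;> simp [h1, h2, Prod.ext_iff]
  let σ : (Fin N × Fin d) × (Fin N × Fin d) → (Fin N × Fin d) × (Fin N × Fin d) :=
    fun z => (z.2, z.1)
  have hGσ : ∀ z z', dotc (G (σ z)) (G (σ z')) = if z = z' then 1 else 0 := by
    intro z z'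
    rw [hG]
    exact if_congr (by simp [σ, Prod.ext_iff, and_comm]) rfl rfl
  let w : (Fin N × Fin d) × (Fin N × Fin d) → ℂ := fun z => c z.1.1 * star (c z.2.1)
  let r : (Fin N × Fin d) × (Fin N × Fin d) → ℝ :=
    fun z => ‖c z.1.1‖ * ‖c z.2.1‖
  -- rewrite R
  have hR' : R = (d : ℂ)⁻¹ • ∑ z, w z • outer (G (σ z)) (G z) := by
    rw [hR]
    congr 1
    simp only [Fintype.sum_prod_type]
    refine Finset.sum_congr rfl fun i _ => ?_
    rw [Finset.sum_comm]
    refine Finset.sum_congr rfl fun i' _ => Finset.sum_congr rfl fun μ _ =>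
      Finset.sum_congr rfl fun μ' _ => ?_
    rw [outer_kron]
  -- conjugate transpose of R
  have hRH : Rᴴ = (d : ℂ)⁻¹ • ∑ z, star (w z) • outer (G z) (G (σ z)) := by
    rw [hR', Matrix.conjTranspose_smul, Matrix.conjTranspose_sum]
    simp only [Matrix.conjTranspose_smul, outer_conjTranspose]
    rw [show star ((d : ℂ)⁻¹) = (d : ℂ)⁻¹ by simp]
  -- the square root candidate
  set S : Matrix (a × b) (a × b) ℂ :=
      (d : ℂ)⁻¹ • ∑ z, ((r z : ℝ) : ℂ) • outer (G z) (G z) with hS_def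
  have h1 : ∀ x : ℂ, star x * x = ((‖x‖ : ℝ) : ℂ) * ((‖x‖ : ℝ) : ℂ) := by
    intro x
    rw [mul_comm, Complex.star_def, Complex.mul_conj, ← Complex.sq_norm, sq, Complex.ofReal_mul]
  have hww : ∀ z, star (w z) * w z = ((r z : ℝ) : ℂ) * ((r z : ℝ) : ℂ) := by
    intro z
    show star (c z.1.1 * star (c z.2.1)) * (c z.1.1 * star (c z.2.1))
      = ((‖c z.1.1‖ * ‖c z.2.1‖ : ℝ) : ℂ) * _
    rw [star_mul', star_star]
    calc star (c z.1.1) * c z.2.1 * (c z.1.1 * star (c z.2.1))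
        = (star (c z.1.1) * c z.1.1) * (star (c z.2.1) * c z.2.1) := by ring
      _ = _ := by rw [h1, h1, Complex.ofReal_mul]; ring
  have h2 : (∑ z, star (w z) • outer (G z) (G (σ z))) * (∑ z, w z • outer (G (σ z)) (G z))
      = ∑ z, (star (w z) * w z) • outer (G z) (G z) := mul_collapse _ _ _ _ _ _ hGσ
  have h3 : (∑ z, ((r z : ℝ) : ℂ) • outer (G z) (G z)) * (∑ z, ((r z : ℝ) : ℂ) • outer (G z) (G z))
      = ∑ z, (((r z : ℝ) : ℂ) * ((r z : ℝ) : ℂ)) • outer (G z) (G z) := mul_collapse _ _ _ _ _ _ hG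
  have key : Rᴴ * R = S * S := by
    rw [hRH, hR', hS_def]
    rw [smul_mul_assoc, mul_smul_comm, smul_mul_assoc, mul_smul_comm, smul_smul, smul_smul]
    rw [h2, h3]
    congr 1
    exact Finset.sum_congr rfl fun z _ => by rw [hww z]
  have hdC0 : (0 : ℂ) ≤ (d : ℂ)⁻¹ := by
    rw [show ((d : ℂ))⁻¹ = (((d : ℝ)⁻¹ : ℝ) : ℂ) by push_cast; ring]
    rw [Complex.zero_le_real]
    positivity
  have hS_psd : S.PosSemidef := by
    refine Matrix.PosSemidef.of_dotProduct_mulVec_nonneg ?_ ?_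
    · show Sᴴ = S
      rw [hS_def, Matrix.conjTranspose_smul, Matrix.conjTranspose_sum]
      simp only [Matrix.conjTranspose_smul, outer_conjTranspose, Complex.star_def,
        Complex.conj_ofReal]
      rw [show (starRingEnd ℂ) ((d : ℂ)⁻¹) = (d : ℂ)⁻¹ by simp]
    · intro x
      have hqf : star x ⬝ᵥ S *ᵥ x
          = (d : ℂ)⁻¹ * ∑ z, ((r z : ℝ) : ℂ) * (star (dotc (G z) x) * dotc (G z) x) := by
        rw [hS_def, Matrix.smul_mulVec, sum_mulVec']
        simp only [Matrix.smul_mulVec, dotProduct_sum', dotProduct_smul, smul_eq_mul,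
          dot_outer_self]
      rw [hqf]
      refine mul_nonneg hdC0 (Finset.sum_nonneg fun z _ => mul_nonneg ?_ (star_mul_self_nonneg _))
      rw [Complex.zero_le_real]
      positivity
  have hsqrt : ((Matrix.posSemidef_conjTranspose_mul_self R).1.eigenvectorUnitary
      : Matrix (a × b) (a × b) ℂ) *
      diagonal (((↑) : ℝ → ℂ) ∘ (√·) ∘ (Matrix.posSemidef_conjTranspose_mul_self R).1.eigenvalues) *
      (star (Matrix.posSemidef_conjTranspose_mul_self R).1.eigenvectorUnitary
        : Matrix (a × b) (a × b) ℂ) = S := by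
    open scoped MatrixOrder in
    have hA := (Matrix.posSemidef_conjTranspose_mul_self R).1
    have e1 : hA.cfc Real.sqrt = (hA.eigenvectorUnitary : Matrix (a × b) (a × b) ℂ) *
        diagonal (((↑) : ℝ → ℂ) ∘ (√·) ∘ hA.eigenvalues) *
        (star hA.eigenvectorUnitary : Matrix (a × b) (a × b) ℂ) := by
      simp [Matrix.IsHermitian.cfc, Unitary.conjStarAlgAut_apply, Function.comp_def]
    rw [← e1, ← hA.cfc_eq, ← cfcₙ_eq_cfc (hf0 := Real.sqrt_zero), ← CFC.sqrt_eq_real_sqrt _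
      (Matrix.posSemidef_conjTranspose_mul_self R).nonneg,
      CFC.sqrt_unique key.symm hS_psd.nonneg]
  -- trace computation
  have htrace : S.trace = (((d : ℝ)⁻¹ * ((d * s) * (d * s)) : ℝ) : ℂ) := by
    rw [hS_def, Matrix.trace_smul, Matrix.trace_sum]
    have : ∀ z, (((r z : ℝ) : ℂ) • outer (G z) (G z)).trace = ((r z : ℝ) : ℂ) := by
      intro z
      rw [Matrix.trace_smul, trace_outer, hG, if_pos rfl, smul_eq_mul, mul_one]
    rw [Finset.sum_congr rfl fun z _ => this z]
    have hp : ∑ p : Fin N × Fin d, ‖c p.1‖ = (d : ℝ) * s := by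
      rw [Fintype.sum_prod_type, hs_def, Finset.mul_sum]
      refine Finset.sum_congr rfl fun i _ => ?_
      simp [Finset.sum_const, mul_comm]
    have hsum : ∑ z, r z = ((d : ℝ) * s) * ((d : ℝ) * s) := by
      rw [← hp, Finset.sum_mul_sum]
      show ∑ z : (Fin N × Fin d) × (Fin N × Fin d),
        ‖c z.1.1‖ * ‖c z.2.1‖ = _
      rw [Fintype.sum_prod_type]
    rw [← Complex.ofReal_sum, hsum, smul_eq_mul]
    push_cast
    ring
  have htn : traceNorm R = (d : ℝ) * s ^ 2 := by
    rw [traceNorm, hsqrt, htrace, Complex.ofReal_re]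
    rw [show (d : ℝ)⁻¹ * ((d * s) * (d * s)) = (d : ℝ) * s ^ 2 by field_simp]
  -- positivity of s
  have hs0 : 0 ≤ s := Finset.sum_nonneg fun i _ => norm_nonneg _
  have hs : 0 < s := by
    rcases hs0.lt_or_eq with h | h
    · exact h
    · exfalso
      have hz : ∀ i ∈ Finset.univ, ‖c i‖ = 0 :=
        (Finset.sum_eq_zero_iff_of_nonneg fun i _ => norm_nonneg _).mp h.symm
      rw [Finset.sum_congr rfl fun i hi => by rw [hz i hi]] at hc
      simp at hc
  rw [htn, Real.logb_mul hdR (by positivity), Real.logb_pow, add_comm]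
  norm_num
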